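/- Under the uniform distribution on S_5, the joint distribution of the pair (d_{C,1}, d_{C,2}) of Cayley distances, where d_{C,t}(σ) := d_C(π_t(σ), π_{t+1}(σ)), is given on {0,1,2}² by (1/60) times the matrix with rows (1,1,3), (1,5,14), (3,14,18), and the Pearson correlation of d_{C,1} and d_{C,2} equals −2/25. The joint distribution of (d_{K,1}, d_{K,2}), where d_{K,t}(σ) := d_K(π_t(σ), π_{t+1}(σ)), is given on {0,1,2,3}² by (1/60) times the matrix with rows (1,1,3,0), (1,1,7,1), (3,7,18,7), (0,1,7,2), and the Pearson correlation of d_{K,1} and d_{K,2} equals 22/115. -/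

import Mathlib

set_option maxRecDepth 1000000


open Equiv

/-- The transcript of an ordered pair of permutations: `τ(π₁,π₂) = π₁⁻¹ ∘ π₂`. -/
def transcript {m : ℕ} (π₁ π₂ : Perm (Fin m)) : Perm (Fin m) := π₁⁻¹ * π₂

/-- The ordinal pattern of a triple `y` with pairwise distinct entries: the unique
permutation `π ∈ S_3` with `y (π 0) < y (π 1) < y (π 2)`. -/
noncomputable def opattern {α : Type*} [LinearOrder α] (y : Fin 3 → α) : Perm (Fin 3) :=
  if h : ∃ π : Perm (Fin 3), y (π 0) < y (π 1) ∧ y (π 1) < y (π 2) then h.choose else 1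

/-- For `σ ∈ S_N`, viewed as the tuple `(σ 0, …, σ (N-1))`, the ordinal pattern of
the window `(σ t, σ (t+1), σ (t+2))` (0-based `t`). -/
noncomputable def patN {N : ℕ} (σ : Perm (Fin N)) (t : ℕ) (h : t + 2 < N) : Perm (Fin 3) :=
  opattern fun i : Fin 3 => σ ⟨t + i, by have := i.isLt; omega⟩

/-- The lag-1 transcript of the ordinal patterns at (0-based) windows `t` and `t+1`;
this is `τ_{t+1}` in the 1-based numbering of the paper. -/
noncomputable def tauN {N : ℕ} (σ : Perm (Fin N)) (t : ℕ) (h : t + 3 < N) : Perm (Fin 3) :=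
  transcript (patN σ t (by omega)) (patN σ (t + 1) (by omega))

/-- `π^[1] = (1,2,3)`, the identity. -/
def p1 : Perm (Fin 3) := 1
/-- `π^[2] = (1,3,2)`. -/
def p2 : Perm (Fin 3) := Equiv.swap 1 2
/-- `π^[3] = (2,1,3)`. -/
def p3 : Perm (Fin 3) := Equiv.swap 0 1
/-- `π^[4] = (2,3,1)`, i.e. `0 ↦ 1 ↦ 2 ↦ 0`. -/
def p4 : Perm (Fin 3) := Equiv.swap 0 1 * Equiv.swap 1 2
/-- `π^[5] = (3,1,2)`, i.e. `0 ↦ 2 ↦ 1 ↦ 0`. -/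
def p5 : Perm (Fin 3) := Equiv.swap 1 2 * Equiv.swap 0 1
/-- `π^[6] = (3,2,1)`. -/
def p6 : Perm (Fin 3) := Equiv.swap 0 2

/-- The labelling `k ↦ π^[k+1]` of the six elements of `S_3`. -/
def lab : Fin 6 → Perm (Fin 3) := ![p1, p2, p3, p4, p5, p6]

/-- A permutation of `{1,…,m}` is an adjacent transposition if it is a
transposition of the form `(i, i+1)`. -/
def IsAdjSwap {m : ℕ} (s : Perm (Fin m)) : Prop :=
  ∃ i : ℕ, ∃ h : i + 1 < m, s = Equiv.swap ⟨i, Nat.lt_of_succ_lt h⟩ ⟨i + 1, h⟩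

/-- The Cayley distance: the least `k` such that the transcript of `π₁, π₂` is a
product of `k` transpositions. -/
noncomputable def dC {m : ℕ} (π₁ π₂ : Perm (Fin m)) : ℕ :=
  sInf {k : ℕ | ∃ l : List (Perm (Fin m)), l.length = k ∧ (∀ s ∈ l, s.IsSwap) ∧
    l.prod = transcript π₁ π₂}

/-- The Kendall distance: the least `k` such that the transcript of `π₁, π₂` is a
product of `k` adjacent transpositions. -/
noncomputable def dK {m : ℕ} (π₁ π₂ : Perm (Fin m)) : ℕ :=
  sInf {k : ℕ | ∃ l : List (Perm (Fin m)), l.length = k ∧ (∀ s ∈ l, IsAdjSwap s) ∧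
    l.prod = transcript π₁ π₂}

/-- `d_{C,1}(σ)`: the Cayley distance of the first pair of successive ordinal
patterns of `σ ∈ S_5`. -/
noncomputable def dC1 (σ : Perm (Fin 5)) : ℕ := dC (patN σ 0 (by omega)) (patN σ 1 (by omega))
/-- `d_{C,2}(σ)`. -/
noncomputable def dC2 (σ : Perm (Fin 5)) : ℕ := dC (patN σ 1 (by omega)) (patN σ 2 (by omega))
/-- `d_{K,1}(σ)`. -/
noncomputable def dK1 (σ : Perm (Fin 5)) : ℕ := dK (patN σ 0 (by omega)) (patN σ 1 (by omega))
/-- `d_{K,2}(σ)`. -/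
noncomputable def dK2 (σ : Perm (Fin 5)) : ℕ := dK (patN σ 1 (by omega)) (patN σ 2 (by omega))

/-- Expectation under the uniform distribution on `S_5`. -/
noncomputable def EX (f : Perm (Fin 5) → ℕ) : ℝ := (∑ σ : Perm (Fin 5), (f σ : ℝ)) / 120

/-- Covariance under the uniform distribution on `S_5`. -/
noncomputable def Cov (f g : Perm (Fin 5) → ℕ) : ℝ :=
  (∑ σ : Perm (Fin 5), ((f σ : ℝ) - EX f) * ((g σ : ℝ) - EX g)) / 120

section Aux

/-! ### Auxiliary machinery -/

private lemma chainSM {α : Type*} [Preorder α] {u : Fin 3 → α} (h1 : u 0 < u 1) (h2 : u 1 < u 2) :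
    ∀ i j : Fin 3, i < j → u i < u j := by
  intro i j hij
  fin_cases i <;> fin_cases j <;>
    first
      | exact absurd hij (by decide)
      | exact h1
      | exact h2
      | exact h1.trans h2

private lemma smono_perm3 : ∀ μ : Perm (Fin 3), (∀ i j : Fin 3, i < j → μ i < μ j) → μ = 1 := by
  decide

private lemma opattern_eq {α : Type*} [LinearOrder α] {y : Fin 3 → α} {π : Perm (Fin 3)}
    (h1 : y (π 0) < y (π 1)) (h2 : y (π 1) < y (π 2)) : opattern y = π := by
  have hex : ∃ ρ : Perm (Fin 3), y (ρ 0) < y (ρ 1) ∧ y (ρ 1) < y (ρ 2) := ⟨π, h1, h2⟩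
  rw [opattern, dif_pos hex]
  obtain ⟨k1, k2⟩ := hex.choose_spec
  set ρ := hex.choose with hρ
  have hπm : ∀ i j : Fin 3, i < j → y (π i) < y (π j) := chainSM h1 h2
  have hρm : ∀ i j : Fin 3, i < j → y (ρ i) < y (ρ j) := chainSM k1 k2
  have key : ∀ i j : Fin 3, i < j → (π⁻¹ * ρ) i < (π⁻¹ * ρ) j := by
    intro i j hij
    by_contra hc
    push_neg at hc
    rcases hc.lt_or_eq with h | h
    · have := hπm _ _ h
      simp only [Perm.mul_apply, Perm.inv_def, Equiv.apply_symm_apply] at this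
      exact absurd (hρm i j hij) (by exact not_lt.2 this.le)
    · have : ρ j = ρ i := by
        have := congrArg π h
        simpa [Perm.mul_apply] using this
      exact absurd (hρm i j hij) (by rw [this]; exact lt_irrefl _)
  have hone := smono_perm3 _ key
  have : ρ = π := by
    have h2 := congrArg (fun τ => π * τ) hone
    simpa [mul_assoc] using h2
  exact this

/-- A computable version of the ordinal pattern. -/
def cpat {α : Type*} [LinearOrder α] (y : Fin 3 → α) : Perm (Fin 3) :=
  if y 0 < y 1 then (if y 1 < y 2 then p1 else if y 0 < y 2 then p2 else p5)
  else (if y 1 < y 2 then (if y 0 < y 2 then p3 else p4) else p6)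

private lemma papp : p2 0 = 0 ∧ p2 1 = 2 ∧ p2 2 = 1 ∧ p3 0 = 1 ∧ p3 1 = 0 ∧ p3 2 = 2 ∧
    p4 0 = 1 ∧ p4 1 = 2 ∧ p4 2 = 0 ∧ p5 0 = 2 ∧ p5 1 = 0 ∧ p5 2 = 1 ∧
    p6 0 = 2 ∧ p6 1 = 1 ∧ p6 2 = 0 := by decide

private lemma opattern_eq_cpat {α : Type*} [LinearOrder α] {y : Fin 3 → α}
    (hy : Function.Injective y) : opattern y = cpat y := by
  obtain ⟨a1,a2,a3,b1,b2,b3,c1,c2,c3,d1,d2,d3,e1,e2,e3⟩ := papp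
  have n01 : y 0 ≠ y 1 := fun h => absurd (hy h) (by decide)
  have n02 : y 0 ≠ y 2 := fun h => absurd (hy h) (by decide)
  have n12 : y 1 ≠ y 2 := fun h => absurd (hy h) (by decide)
  unfold cpat
  split_ifs with h1 h2 h3 h4 h5
  · exact opattern_eq (by simpa [p1] using h1) (by simpa [p1] using h2)
  · exact opattern_eq (by rw [a1, a2]; exact h3)
      (by rw [a2, a3]; exact (not_lt.1 h2).lt_of_ne n12.symm)
  · exact opattern_eq (by rw [d1, d2]; exact (not_lt.1 h3).lt_of_ne n02.symm)
      (by rw [d2, d3]; exact h1)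
  · exact opattern_eq (by rw [b1, b2]; exact (not_lt.1 h1).lt_of_ne n01.symm)
      (by rw [b2, b3]; exact h5)
  · exact opattern_eq (by rw [c1, c2]; exact h4)
      (by rw [c2, c3]; exact (not_lt.1 h5).lt_of_ne n02.symm)
  · exact opattern_eq (by rw [e1, e2]; exact (not_lt.1 h4).lt_of_ne n12.symm)
      (by rw [e2, e3]; exact (not_lt.1 h1).lt_of_ne n01.symm)

/-- Computable Cayley distance of a transcript in `S_3`. -/
def cdC (τ : Perm (Fin 3)) : ℕ := if τ = 1 then 0 else if τ = p4 ∨ τ = p5 then 2 else 1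
/-- Computable Kendall distance of a transcript in `S_3`. -/
def cdK (τ : Perm (Fin 3)) : ℕ :=
  if τ = 1 then 0 else if τ = p2 ∨ τ = p3 then 1 else if τ = p6 then 3 else 2

private lemma nat_sInf_eq {S : Set ℕ} {k : ℕ} (hk : k ∈ S) (h : ∀ j ∈ S, k ≤ j) : sInf S = k :=
  le_antisymm (Nat.sInf_le hk) (h _ (Nat.sInf_mem ⟨k, hk⟩))

private lemma cayley_eq (τ : Perm (Fin 3)) :
    sInf {k : ℕ | ∃ l : List (Perm (Fin 3)), l.length = k ∧ (∀ s ∈ l, s.IsSwap) ∧ l.prod = τ}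
      = cdC τ := by
  have h6 : τ = p1 ∨ τ = p2 ∨ τ = p3 ∨ τ = p4 ∨ τ = p5 ∨ τ = p6 := by revert τ; decide
  have hswap : ∀ a b : Fin 3, a ≠ b → ¬(Equiv.swap a b = p4 ∨ Equiv.swap a b = p5) := by decide
  have hne0 : ∀ τ' : Perm (Fin 3), τ' ≠ 1 →
      ∀ j ∈ {k : ℕ | ∃ l : List (Perm (Fin 3)), l.length = k ∧ (∀ s ∈ l, s.IsSwap) ∧ l.prod = τ'},
      1 ≤ j := by
    intro τ' hτ j hj
    rcases Nat.eq_zero_or_pos j with rfl | h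
    · obtain ⟨l, hl, _, hp⟩ := hj
      rw [List.length_eq_zero_iff.mp hl] at hp
      exact absurd hp.symm hτ
    · exact h
  rcases h6 with rfl | rfl | rfl | rfl | rfl | rfl
  · rw [show cdC p1 = 0 by decide]
    exact nat_sInf_eq ⟨[], rfl, by simp, by simp [p1]⟩ (fun j _ => Nat.zero_le j)
  · rw [show cdC p2 = 1 by decide]
    refine nat_sInf_eq ⟨[p2], rfl, ?_, by simp⟩ (hne0 _ (by decide))
    rintro s hs
    rw [List.mem_singleton.mp hs]
    exact ⟨1, 2, by decide, rfl⟩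
  · rw [show cdC p3 = 1 by decide]
    refine nat_sInf_eq ⟨[p3], rfl, ?_, by simp⟩ (hne0 _ (by decide))
    rintro s hs
    rw [List.mem_singleton.mp hs]
    exact ⟨0, 1, by decide, rfl⟩
  · rw [show cdC p4 = 2 by decide]
    refine nat_sInf_eq ⟨[Equiv.swap 0 1, Equiv.swap 1 2], rfl, ?_, by simp [p4]⟩ ?_
    · rintro s hs
      rcases List.mem_pair.mp hs with rfl | rfl
      exacts [⟨0, 1, by decide, rfl⟩, ⟨1, 2, by decide, rfl⟩]
    · rintro j ⟨l, rfl, hsw, hp⟩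
      rcases l with _ | ⟨s, _ | ⟨t, l⟩⟩
      · exact absurd hp (by simp; decide)
      · obtain ⟨a, b, hab, rfl⟩ := hsw s (by simp)
        simp at hp
        exact absurd (Or.inl hp) (hswap a b hab)
      · simp only [List.length]; omega
  · rw [show cdC p5 = 2 by decide]
    refine nat_sInf_eq ⟨[Equiv.swap 1 2, Equiv.swap 0 1], rfl, ?_, by simp [p5]⟩ ?_
    · rintro s hs
      rcases List.mem_pair.mp hs with rfl | rfl
      exacts [⟨1, 2, by decide, rfl⟩, ⟨0, 1, by decide, rfl⟩]
    · rintro j ⟨l, rfl, hsw, hp⟩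
      rcases l with _ | ⟨s, _ | ⟨t, l⟩⟩
      · exact absurd hp (by simp; decide)
      · obtain ⟨a, b, hab, rfl⟩ := hsw s (by simp)
        simp at hp
        exact absurd (Or.inr hp) (hswap a b hab)
      · simp only [List.length]; omega
  · rw [show cdC p6 = 1 by decide]
    refine nat_sInf_eq ⟨[p6], rfl, ?_, by simp⟩ (hne0 _ (by decide))
    rintro s hs
    rw [List.mem_singleton.mp hs]
    exact ⟨0, 2, by decide, rfl⟩

private lemma adj3 {s : Perm (Fin 3)} (h : IsAdjSwap s) :
    s = Equiv.swap 0 1 ∨ s = Equiv.swap 1 2 := by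
  obtain ⟨i, hi, rfl⟩ := h
  have hi2 : i < 2 := by omega
  interval_cases i
  · left
    congr 1
  · right
    congr 1

private lemma adj01 : IsAdjSwap (Equiv.swap 0 1 : Perm (Fin 3)) := ⟨0, by omega, by decide⟩
private lemma adj12 : IsAdjSwap (Equiv.swap 1 2 : Perm (Fin 3)) := ⟨1, by omega, by decide⟩

private lemma kendall_eq (τ : Perm (Fin 3)) :
    sInf {k : ℕ | ∃ l : List (Perm (Fin 3)), l.length = k ∧ (∀ s ∈ l, IsAdjSwap s) ∧ l.prod = τ}
      = cdK τ := by
  have h6 : τ = p1 ∨ τ = p2 ∨ τ = p3 ∨ τ = p4 ∨ τ = p5 ∨ τ = p6 := by revert τ; decide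
  have hne0 : ∀ τ' : Perm (Fin 3), τ' ≠ 1 →
      ∀ j ∈ {k : ℕ | ∃ l : List (Perm (Fin 3)), l.length = k ∧ (∀ s ∈ l, IsAdjSwap s) ∧
        l.prod = τ'}, 1 ≤ j := by
    intro τ' hτ j hj
    rcases Nat.eq_zero_or_pos j with rfl | h
    · obtain ⟨l, hl, _, hp⟩ := hj
      rw [List.length_eq_zero_iff.mp hl] at hp
      exact absurd hp.symm hτ
    · exact h
  have hne1 : ∀ τ' : Perm (Fin 3), τ' ≠ 1 → τ' ≠ Equiv.swap 0 1 → τ' ≠ Equiv.swap 1 2 →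
      ∀ j ∈ {k : ℕ | ∃ l : List (Perm (Fin 3)), l.length = k ∧ (∀ s ∈ l, IsAdjSwap s) ∧
        l.prod = τ'}, 2 ≤ j := by
    intro τ' hτ h01 h12 j hj
    obtain ⟨l, rfl, hsw, hp⟩ := hj
    rcases l with _ | ⟨s, _ | ⟨t, l⟩⟩
    · exact absurd hp.symm hτ
    · simp only [List.prod_cons, List.prod_nil, mul_one] at hp
      rcases adj3 (hsw s (by simp)) with rfl | rfl
      exacts [absurd hp.symm h01, absurd hp.symm h12]
    · simp only [List.length]; omega
  rcases h6 with rfl | rfl | rfl | rfl | rfl | rfl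
  · rw [show cdK p1 = 0 by decide]
    exact nat_sInf_eq ⟨[], rfl, by simp, by simp [p1]⟩ (fun j _ => Nat.zero_le j)
  · rw [show cdK p2 = 1 by decide]
    refine nat_sInf_eq ⟨[p2], rfl, ?_, by simp⟩ (hne0 _ (by decide))
    rintro s hs
    rw [List.mem_singleton.mp hs]
    exact adj12
  · rw [show cdK p3 = 1 by decide]
    refine nat_sInf_eq ⟨[p3], rfl, ?_, by simp⟩ (hne0 _ (by decide))
    rintro s hs
    rw [List.mem_singleton.mp hs]
    exact adj01
  · rw [show cdK p4 = 2 by decide]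
    refine nat_sInf_eq ⟨[Equiv.swap 0 1, Equiv.swap 1 2], rfl, ?_, by simp [p4]⟩
      (hne1 _ (by decide) (by decide) (by decide))
    rintro s hs
    rcases List.mem_pair.mp hs with rfl | rfl
    exacts [adj01, adj12]
  · rw [show cdK p5 = 2 by decide]
    refine nat_sInf_eq ⟨[Equiv.swap 1 2, Equiv.swap 0 1], rfl, ?_, by simp [p5]⟩
      (hne1 _ (by decide) (by decide) (by decide))
    rintro s hs
    rcases List.mem_pair.mp hs with rfl | rfl
    exacts [adj12, adj01]
  · rw [show cdK p6 = 3 by decide]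
    refine nat_sInf_eq
      ⟨[Equiv.swap 0 1, Equiv.swap 1 2, Equiv.swap 0 1], rfl, ?_, by
        simp only [List.prod_cons, List.prod_nil, mul_one]; decide⟩ ?_
    · rintro s hs
      simp only [List.mem_cons, List.not_mem_nil, or_false] at hs
      rcases hs with rfl | rfl | rfl
      exacts [adj01, adj12, adj01]
    · rintro j ⟨l, rfl, hsw, hp⟩
      rcases l with _ | ⟨s, _ | ⟨t, _ | ⟨u, l⟩⟩⟩
      · exact absurd hp (by simp; decide)
      · simp only [List.prod_cons, List.prod_nil, mul_one] at hp
        rcases adj3 (hsw s (by simp)) with rfl | rfl <;> revert hp <;> decide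
      · simp only [List.prod_cons, List.prod_nil, mul_one] at hp
        rcases adj3 (hsw s (by simp)) with rfl | rfl <;>
          rcases adj3 (hsw t (by simp)) with rfl | rfl <;> revert hp <;> decide
      · simp only [List.length]; omega

/-- The window of `σ` of length 3 starting at `t ∈ {0,1,2}`. -/
def cw (σ : Perm (Fin 5)) (t : Fin 3) : Fin 3 → Fin 5 := fun i => σ ⟨(t : ℕ) + i, by omega⟩

private lemma cw_inj (σ : Perm (Fin 5)) (t : Fin 3) : Function.Injective (cw σ t) := by
  intro i j hij
  have h1 := σ.injective hij
  have h2 := Fin.val_eq_of_eq h1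
  simp only [cw] at h2 ⊢
  exact Fin.ext (by omega)

/-- Computable version of `dC1`. -/
def f1 (σ : Perm (Fin 5)) : ℕ := cdC ((cpat (cw σ 0))⁻¹ * cpat (cw σ 1))
/-- Computable version of `dC2`. -/
def f2 (σ : Perm (Fin 5)) : ℕ := cdC ((cpat (cw σ 1))⁻¹ * cpat (cw σ 2))
/-- Computable version of `dK1`. -/
def g1 (σ : Perm (Fin 5)) : ℕ := cdK ((cpat (cw σ 0))⁻¹ * cpat (cw σ 1))
/-- Computable version of `dK2`. -/
def g2 (σ : Perm (Fin 5)) : ℕ := cdK ((cpat (cw σ 1))⁻¹ * cpat (cw σ 2))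

private lemma hf1 : dC1 = f1 := by
  funext σ
  unfold dC1 dC f1
  rw [cayley_eq]
  show cdC ((opattern (cw σ 0))⁻¹ * opattern (cw σ 1)) = _
  rw [opattern_eq_cpat (cw_inj σ 0), opattern_eq_cpat (cw_inj σ 1)]

private lemma hf2 : dC2 = f2 := by
  funext σ
  unfold dC2 dC f2
  rw [cayley_eq]
  show cdC ((opattern (cw σ 1))⁻¹ * opattern (cw σ 2)) = _
  rw [opattern_eq_cpat (cw_inj σ 1), opattern_eq_cpat (cw_inj σ 2)]

private lemma hg1 : dK1 = g1 := by
  funext σ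
  unfold dK1 dK g1
  rw [kendall_eq]
  show cdK ((opattern (cw σ 0))⁻¹ * opattern (cw σ 1)) = _
  rw [opattern_eq_cpat (cw_inj σ 0), opattern_eq_cpat (cw_inj σ 1)]

private lemma hg2 : dK2 = g2 := by
  funext σ
  unfold dK2 dK g2
  rw [kendall_eq]
  show cdK ((opattern (cw σ 1))⁻¹ * opattern (cw σ 2)) = _
  rw [opattern_eq_cpat (cw_inj σ 1), opattern_eq_cpat (cw_inj σ 2)]

private lemma card_perm5 : ((Finset.univ : Finset (Perm (Fin 5))).card : ℝ) = 120 := by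
  rw [Finset.card_univ]
  norm_num [Fintype.card_perm, Nat.factorial]

private lemma Cov_comp (f g : Perm (Fin 5) → ℕ) :
    Cov f g = (∑ σ : Perm (Fin 5), (f σ : ℝ) * (g σ : ℝ)) / 120 - EX f * EX g := by
  unfold Cov EX
  have expand : ∀ σ : Perm (Fin 5),
      ((f σ : ℝ) - (∑ σ : Perm (Fin 5), (f σ : ℝ)) / 120) *
        ((g σ : ℝ) - (∑ σ : Perm (Fin 5), (g σ : ℝ)) / 120)
      = (f σ : ℝ) * (g σ : ℝ)
        - ((∑ σ : Perm (Fin 5), (g σ : ℝ)) / 120) * (f σ : ℝ)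
        - ((∑ σ : Perm (Fin 5), (f σ : ℝ)) / 120) * (g σ : ℝ)
        + ((∑ σ : Perm (Fin 5), (f σ : ℝ)) / 120) * ((∑ σ : Perm (Fin 5), (g σ : ℝ)) / 120) :=
    fun σ => by ring
  rw [Finset.sum_congr rfl (fun σ _ => expand σ)]
  rw [Finset.sum_add_distrib, Finset.sum_sub_distrib, Finset.sum_sub_distrib,
    ← Finset.mul_sum, ← Finset.mul_sum, Finset.sum_const, nsmul_eq_mul, card_perm5]
  ring

private lemma cast_sum_eq {h : Perm (Fin 5) → ℕ} {n : ℕ}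
    (hn : ∑ σ : Perm (Fin 5), h σ = n) : ∑ σ : Perm (Fin 5), (h σ : ℝ) = (n : ℝ) := by
  rw [← Nat.cast_sum, hn]

private lemma keyC : ∀ k l : Fin 3,
    (Finset.univ.filter fun σ : Perm (Fin 5) => f1 σ = (k : ℕ) ∧ f2 σ = (l : ℕ)).card
      = 2 * (!![1, 1, 3; 1, 5, 14; 3, 14, 18] : Matrix (Fin 3) (Fin 3) ℕ) k l := by decide

private lemma keyK : ∀ k l : Fin 4,
    (Finset.univ.filter fun σ : Perm (Fin 5) => g1 σ = (k : ℕ) ∧ g2 σ = (l : ℕ)).card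
      = 2 * (!![1, 1, 3, 0; 1, 1, 7, 1; 3, 7, 18, 7; 0, 1, 7, 2] : Matrix (Fin 4) (Fin 4) ℕ)
          k l := by decide

private lemma sumf1 : ∑ σ : Perm (Fin 5), f1 σ = 180 := by decide
private lemma sumf2 : ∑ σ : Perm (Fin 5), f2 σ = 180 := by decide
private lemma sumf11 : ∑ σ : Perm (Fin 5), f1 σ * f1 σ = 320 := by decide
private lemma sumf22 : ∑ σ : Perm (Fin 5), f2 σ * f2 σ = 320 := by decide
private lemma sumf12 : ∑ σ : Perm (Fin 5), f1 σ * f2 σ = 266 := by decide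
private lemma sumg1 : ∑ σ : Perm (Fin 5), g1 σ = 220 := by decide
private lemma sumg2 : ∑ σ : Perm (Fin 5), g2 σ = 220 := by decide
private lemma sumg11 : ∑ σ : Perm (Fin 5), g1 σ * g1 σ = 480 := by decide
private lemma sumg22 : ∑ σ : Perm (Fin 5), g2 σ * g2 σ = 480 := by decide
private lemma sumg12 : ∑ σ : Perm (Fin 5), g1 σ * g2 σ = 418 := by decide

private lemma sum_mul_cast {h h' : Perm (Fin 5) → ℕ} {n : ℕ}
    (hn : ∑ σ : Perm (Fin 5), h σ * h' σ = n) :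
    ∑ σ : Perm (Fin 5), (h σ : ℝ) * (h' σ : ℝ) = (n : ℝ) := by
  have := congrArg (Nat.cast (R := ℝ)) hn
  push_cast at this
  exact this

private lemma EX_comp {h : Perm (Fin 5) → ℕ} {n : ℕ} (hn : ∑ σ : Perm (Fin 5), h σ = n) :
    EX h = (n : ℝ) / 120 := by
  unfold EX
  rw [cast_sum_eq hn]

end Aux

/-- Joint lag-1 distribution of the Cayley distances `(1/60)·[[1,1,3],[1,5,14],[3,14,18]]`
with correlation `−2/25`, and of the Kendall distances
`(1/60)·[[1,1,3,0],[1,1,7,1],[3,7,18,7],[0,1,7,2]]` with correlation `22/115`. -/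


theorem distance_biv1_iid :
    (∀ k l : Fin 3,
      (Nat.card {σ : Perm (Fin 5) // dC1 σ = (k : ℕ) ∧ dC2 σ = (l : ℕ)} : ℝ) / 120 =
        (1/60 : ℝ) * !![1, 1, 3; 1, 5, 14; 3, 14, 18] k l) ∧
    Cov dC1 dC2 / (Real.sqrt (Cov dC1 dC1) * Real.sqrt (Cov dC2 dC2)) = -2/25 ∧
    (∀ k l : Fin 4,
      (Nat.card {σ : Perm (Fin 5) // dK1 σ = (k : ℕ) ∧ dK2 σ = (l : ℕ)} : ℝ) / 120 =
        (1/60 : ℝ) * !![1, 1, 3, 0; 1, 1, 7, 1; 3, 7, 18, 7; 0, 1, 7, 2] k l) ∧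
    Cov dK1 dK2 / (Real.sqrt (Cov dK1 dK1) * Real.sqrt (Cov dK2 dK2)) = 22/115 := by
  have covC12 : Cov dC1 dC2 = -1/30 := by
    rw [hf1, hf2, Cov_comp, sum_mul_cast sumf12, EX_comp sumf1, EX_comp sumf2]
    norm_num
  have covC11 : Cov dC1 dC1 = 5/12 := by
    rw [hf1, Cov_comp, sum_mul_cast sumf11, EX_comp sumf1]
    norm_num
  have covC22 : Cov dC2 dC2 = 5/12 := by
    rw [hf2, Cov_comp, sum_mul_cast sumf22, EX_comp sumf2]
    norm_num
  have covK12 : Cov dK1 dK2 = 11/90 := by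
    rw [hg1, hg2, Cov_comp, sum_mul_cast sumg12, EX_comp sumg1, EX_comp sumg2]
    norm_num
  have covK11 : Cov dK1 dK1 = 23/36 := by
    rw [hg1, Cov_comp, sum_mul_cast sumg11, EX_comp sumg1]
    norm_num
  have covK22 : Cov dK2 dK2 = 23/36 := by
    rw [hg2, Cov_comp, sum_mul_cast sumg22, EX_comp sumg2]
    norm_num
  refine ⟨?_, ?_, ?_, ?_⟩
  · intro k l
    have e1 : Nat.card {σ : Perm (Fin 5) // dC1 σ = (k : ℕ) ∧ dC2 σ = (l : ℕ)}
        = (Finset.univ.filter fun σ : Perm (Fin 5) =>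
            f1 σ = (k : ℕ) ∧ f2 σ = (l : ℕ)).card := by
      rw [Nat.card_congr (Equiv.subtypeEquivRight fun σ => by rw [hf1, hf2])]
      rw [Nat.card_eq_fintype_card, Fintype.card_subtype]
    rw [e1, keyC k l]
    push_cast
    fin_cases k <;> fin_cases l <;>
      norm_num [Matrix.cons_val_zero, Matrix.cons_val_one, Matrix.cons_val_two,
        Matrix.head_cons, Matrix.tail_cons]
  · rw [covC12, covC11, covC22, Real.mul_self_sqrt (by norm_num : (0:ℝ) ≤ 5/12)]
    norm_num
  · intro k l
    have e1 : Nat.card {σ : Perm (Fin 5) // dK1 σ = (k : ℕ) ∧ dK2 σ = (l : ℕ)}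
        = (Finset.univ.filter fun σ : Perm (Fin 5) =>
            g1 σ = (k : ℕ) ∧ g2 σ = (l : ℕ)).card := by
      rw [Nat.card_congr (Equiv.subtypeEquivRight fun σ => by rw [hg1, hg2])]
      rw [Nat.card_eq_fintype_card, Fintype.card_subtype]
    rw [e1, keyK k l]
    push_cast
    fin_cases k <;> fin_cases l <;>
      norm_num [Matrix.cons_val_zero, Matrix.cons_val_one, Matrix.cons_val_two,
        Matrix.cons_val_three, Matrix.head_cons, Matrix.tail_cons]
  · rw [covK12, covK11, covK22, Real.mul_self_sqrt (by norm_num : (0:ℝ) ≤ 23/36)]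
    norm_num
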